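/- For each r ≥ 4 and q ≥ 2, the graph D_{r,q} (a cycle of q copies of K_{r,r} minus a perfect-matching edge x_iy_i, linked by edges y_i x_{i+1}) is a connected r-regular graph on n = 2qr vertices with γ_{p,r−3}(D_{r,q}) = 2q = n/r. In particular, γ_{p,r−3}(D_{r,q}) > n/(r+1). -/

import Mathlib

open SimpleGraph

/-- Closed neighborhood of a set of vertices: `N[S]`. -/
def closedNbhd {V : Type*} (G : SimpleGraph V) (S : Set V) : Set V :=
  S ∪ {v | ∃ u ∈ S, G.Adj u v}

/-- The monitored sets `P^i(S)` of the k-power domination process: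
`P^0(S) = N[S]`, `P^{i+1}(S) = ⋃ {N[v] : v ∈ P^i(S), |N[v] \ P^i(S)| ≤ k}`. -/
def monitored {V : Type*} (G : SimpleGraph V) (k : ℕ) (S : Set V) : ℕ → Set V
  | 0 => closedNbhd G S
  | i + 1 => {w | ∃ v ∈ monitored G k S i,
      (closedNbhd G {v} \ monitored G k S i).ncard ≤ k ∧ w ∈ closedNbhd G {v}}

/-- `P^∞(S)`, realized as `P^{|V|}(S)` on a finite vertex type. -/
def monitoredInf {V : Type*} (G : SimpleGraph V) (k : ℕ) (S : Set V) : Set V :=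
  monitored G k S (Nat.card V)

/-- `S` is a k-power dominating set. -/
def IsKPDS {V : Type*} (G : SimpleGraph V) (k : ℕ) (S : Set V) : Prop :=
  monitoredInf G k S = Set.univ

/-- The k-power domination number `γ_{p,k}(G)`. -/
noncomputable def powerDomNumber {V : Type*} (G : SimpleGraph V) (k : ℕ) : ℕ :=
  sInf {m | ∃ S : Set V, S.Finite ∧ S.ncard = m ∧ IsKPDS G k S}

/-- A k-fort: a nonempty set `F` such that every vertex of `N(F) \ F`
has at least `k+1` neighbors in `F`. -/
def IsKFort {V : Type*} (G : SimpleGraph V) (k : ℕ) (F : Set V) : Prop :=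
  F.Nonempty ∧ ∀ v ∈ closedNbhd G F \ F, k + 1 ≤ (G.neighborSet v ∩ F).ncard

/-- Claw-free: no induced `K_{1,3}`. -/
def ClawFree {V : Type*} (G : SimpleGraph V) : Prop :=
  ∀ u a b c : V, G.Adj u a → G.Adj u b → G.Adj u c → a ≠ b → a ≠ c → b ≠ c →
    G.Adj a b ∨ G.Adj a c ∨ G.Adj b c

/-- `r`-regular. -/
def RegularOfDegree {V : Type*} (G : SimpleGraph V) (r : ℕ) : Prop :=
  ∀ v : V, (G.neighborSet v).ncard = r

/-- The domination number `γ(G)`. -/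
noncomputable def domNumber {V : Type*} (G : SimpleGraph V) : ℕ :=
  sInf {m | ∃ S : Set V, S.Finite ∧ S.ncard = m ∧
    ∀ v : V, v ∈ S ∨ ∃ u ∈ S, G.Adj v u}

/-- The total domination number `γ_t(G)`. -/
noncomputable def totalDomNumber {V : Type*} (G : SimpleGraph V) : ℕ :=
  sInf {m | ∃ S : Set V, S.Finite ∧ S.ncard = m ∧ ∀ v : V, ∃ u ∈ S, G.Adj v u}

/-- The graph `D_{r,q}`: a cycle of `q` copies of `K_{r,r}` minus a matching edge
`x_i y_i`, linked by edges `y_i x_{i+1}`.  Vertices are pairs: the copy index and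
either a left-side (`Sum.inl`) or right-side (`Sum.inr`) vertex; `x_i = (i, inl 0)`,
`y_i = (i, inr 0)`. -/
def Dgraph (r q : ℕ) [NeZero r] [NeZero q] :
    SimpleGraph (Fin q × (Fin r ⊕ Fin r)) :=
  SimpleGraph.fromRel (fun p p' =>
    (p.1 = p'.1 ∧ ∃ a b, p.2 = Sum.inl a ∧ p'.2 = Sum.inr b ∧ ¬(a = 0 ∧ b = 0)) ∨
    (p'.1 = p.1 + 1 ∧ p.2 = Sum.inr 0 ∧ p'.2 = Sum.inl 0))

section General
variable {V : Type*} {G : SimpleGraph V}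

lemma mem_closedNbhd {S : Set V} {v : V} :
    v ∈ closedNbhd G S ↔ v ∈ S ∨ ∃ u ∈ S, G.Adj u v := Iff.rfl

lemma closedNbhd_singleton (v : V) :
    closedNbhd G {v} = {v} ∪ G.neighborSet v := by
  ext w; simp [closedNbhd, mem_neighborSet]

lemma monitored_univ {k : ℕ} {S : Set V} (h : closedNbhd G S = Set.univ) (n : ℕ) :
    monitored G k S n = Set.univ := by
  induction n with
  | zero => exact h
  | succ n ih =>
    apply Set.eq_univ_of_forall
    intro w
    refine ⟨w, by rw [ih]; trivial, ?_, ?_⟩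
    · rw [ih]; simp
    · rw [closedNbhd_singleton]; exact Or.inl rfl

lemma fort_avoid [Finite V] {k : ℕ} {S F : Set V}
    (hF : IsKFort G k F) (hSF : S ∩ closedNbhd G F = ∅) :
    ∀ n, monitored G k S n ∩ F = ∅ := by
  have hSN : ∀ u ∈ S, u ∉ closedNbhd G F := by
    intro u hu hu'
    exact absurd (Set.mem_inter hu hu') (by rw [hSF]; exact id)
  intro n
  induction n with
  | zero =>
    rw [Set.eq_empty_iff_forall_notMem]
    rintro w ⟨hw, hwF⟩
    rcases hw with hw | ⟨u, hu, hadj⟩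
    · exact hSN w hw (Or.inl hwF)
    · exact hSN u hu (Or.inr ⟨w, hwF, hadj.symm⟩)
  | succ n ih =>
    rw [Set.eq_empty_iff_forall_notMem]
    rintro w ⟨⟨v, hvP, hcard, hwv⟩, hwF⟩
    have hvF : v ∉ F := fun h => (Set.eq_empty_iff_forall_notMem.mp ih v) ⟨hvP, h⟩
    rw [closedNbhd_singleton] at hwv
    rcases hwv with hwv | hwv
    · exact hvF (Set.mem_singleton_iff.mp hwv ▸ hwF)
    · -- v adjacent to w ∈ F
      have hvN : v ∈ closedNbhd G F \ F :=
        ⟨Or.inr ⟨w, hwF, (SimpleGraph.mem_neighborSet _ _ _ |>.mp hwv).symm⟩, hvF⟩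
      have hfort := hF.2 v hvN
      have hsub : G.neighborSet v ∩ F ⊆ closedNbhd G {v} \ monitored G k S n := by
        rintro x ⟨hx1, hx2⟩
        refine ⟨by rw [closedNbhd_singleton]; exact Or.inr hx1, ?_⟩
        intro hx3
        exact (Set.eq_empty_iff_forall_notMem.mp ih x) ⟨hx3, hx2⟩
      have := Set.ncard_le_ncard hsub (Set.toFinite _)
      omega

lemma kpds_meets_fort [Finite V] {k : ℕ} {S F : Set V}
    (hS : IsKPDS G k S) (hF : IsKFort G k F) :
    (S ∩ closedNbhd G F).Nonempty := by
  by_contra h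
  rw [Set.not_nonempty_iff_eq_empty] at h
  obtain ⟨x, hx⟩ := hF.1
  have h2 := fort_avoid hF h (Nat.card V)
  have : x ∈ monitoredInf G k S := by rw [hS]; trivial
  exact (Set.eq_empty_iff_forall_notMem.mp h2 x) ⟨this, hx⟩

end General
section Graph
variable {r q : ℕ} [NeZero r] [NeZero q]


lemma adj_inl_inr {i j : Fin q} {a b : Fin r} :
    (Dgraph r q).Adj (i, Sum.inl a) (j, Sum.inr b) ↔
      (i = j ∧ ¬(a = 0 ∧ b = 0)) ∨ (a = 0 ∧ b = 0 ∧ i = j + 1) := by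
  simp only [Dgraph, fromRel_adj, ne_eq, Prod.mk.injEq]
  constructor
  · rintro ⟨hne, h | h⟩
    · rcases h with ⟨h1, a', b', ha, hb, hne2⟩ | ⟨h1, h2, h3⟩
      · cases ha; cases hb; exact Or.inl ⟨h1, hne2⟩
      · simp at h2
    · rcases h with ⟨h1, a', b', ha, hb, hne2⟩ | ⟨h1, h2, h3⟩
      · simp at ha
      · simp only [Sum.inr.injEq, Sum.inl.injEq] at h2 h3
        exact Or.inr ⟨h3, h2, h1⟩
  · rintro (⟨rfl, hne2⟩ | ⟨rfl, rfl, rfl⟩)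
    · exact ⟨by simp, Or.inl (Or.inl ⟨rfl, a, b, rfl, rfl, hne2⟩)⟩
    · exact ⟨by simp, Or.inr (Or.inr ⟨rfl, rfl, rfl⟩)⟩

lemma adj_inl_inl {i j : Fin q} {a b : Fin r} :
    ¬ (Dgraph r q).Adj (i, Sum.inl a) (j, Sum.inl b) := by
  simp only [Dgraph, fromRel_adj, ne_eq, Prod.mk.injEq]
  rintro ⟨hne, h | h⟩ <;>
    rcases h with ⟨h1, a', b', ha, hb, hne2⟩ | ⟨h1, h2, h3⟩ <;> simp_all

lemma adj_inr_inr {i j : Fin q} {a b : Fin r} :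
    ¬ (Dgraph r q).Adj (i, Sum.inr a) (j, Sum.inr b) := by
  simp only [Dgraph, fromRel_adj, ne_eq, Prod.mk.injEq]
  rintro ⟨hne, h | h⟩ <;>
    rcases h with ⟨h1, a', b', ha, hb, hne2⟩ | ⟨h1, h2, h3⟩ <;> simp_all

lemma adj_inr_inl {i j : Fin q} {b a : Fin r} :
    (Dgraph r q).Adj (i, Sum.inr b) (j, Sum.inl a) ↔
      (j = i ∧ ¬(a = 0 ∧ b = 0)) ∨ (a = 0 ∧ b = 0 ∧ j = i + 1) := by
  rw [SimpleGraph.adj_comm]; exact adj_inl_inr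

lemma exists_ne_ne (hr : 4 ≤ r) (c : Fin r) : ∃ a : Fin r, a ≠ 0 ∧ a ≠ c := by
  rcases eq_or_ne c ⟨1, by omega⟩ with h | h
  · exact ⟨⟨2, by omega⟩, by simp [Fin.ext_iff], by simp [h, Fin.ext_iff]⟩
  · exact ⟨⟨1, by omega⟩, by simp [Fin.ext_iff], Ne.symm h⟩

lemma ncard_A (c : Fin r) : r - 2 ≤ ({a : Fin r | a ≠ 0 ∧ a ≠ c}).ncard := by
  have h1 : {a : Fin r | a ≠ 0 ∧ a ≠ c} = Set.univ \ {0, c} := by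
    ext a; simp [not_or]
  have h2 : ({0, c} : Set (Fin r)).ncard ≤ 2 := by
    refine le_trans (Set.ncard_insert_le _ _) ?_
    simp [Set.ncard_singleton]
  have h3 : (Set.univ : Set (Fin r)).ncard = r := by
    rw [Set.ncard_univ]; simp
  rw [h1, Set.ncard_diff (Set.subset_univ _)]
  omega

/-- Left fort in copy `i` avoiding column `c`. -/
def FL (i : Fin q) (c : Fin r) : Set (Fin q × (Fin r ⊕ Fin r)) :=
  (fun a => (i, Sum.inl a)) '' {a : Fin r | a ≠ 0 ∧ a ≠ c}

/-- Right fort in copy `i` avoiding column `c`. -/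
def FR (i : Fin q) (c : Fin r) : Set (Fin q × (Fin r ⊕ Fin r)) :=
  (fun b => (i, Sum.inr b)) '' {b : Fin r | b ≠ 0 ∧ b ≠ c}

lemma closedNbhd_FL_subset (i : Fin q) (c : Fin r) :
    closedNbhd (Dgraph r q) (FL i c) ⊆
      {p | p.1 = i ∧ ((∃ a, p.2 = Sum.inl a ∧ a ≠ 0 ∧ a ≠ c) ∨ ∃ b, p.2 = Sum.inr b)} := by
  rintro ⟨j, β⟩ (h | h)
  · obtain ⟨a, ⟨ha0, hac⟩, heq⟩ := h
    cases heq
    exact ⟨rfl, Or.inl ⟨a, rfl, ha0, hac⟩⟩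
  · obtain ⟨u, hu, hadj⟩ := h
    obtain ⟨a, ⟨ha0, hac⟩, rfl⟩ := hu
    cases β with
    | inl a' => exact absurd hadj adj_inl_inl
    | inr b =>
      rcases adj_inl_inr.mp hadj with ⟨rfl, _⟩ | ⟨h0, _, _⟩
      · exact ⟨rfl, Or.inr ⟨b, rfl⟩⟩
      · exact absurd h0 ha0

lemma closedNbhd_FR_subset (i : Fin q) (c : Fin r) :
    closedNbhd (Dgraph r q) (FR i c) ⊆
      {p | p.1 = i ∧ ((∃ b, p.2 = Sum.inr b ∧ b ≠ 0 ∧ b ≠ c) ∨ ∃ a, p.2 = Sum.inl a)} := by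
  rintro ⟨j, β⟩ (h | h)
  · obtain ⟨b, ⟨hb0, hbc⟩, heq⟩ := h
    cases heq
    exact ⟨rfl, Or.inl ⟨b, rfl, hb0, hbc⟩⟩
  · obtain ⟨u, hu, hadj⟩ := h
    obtain ⟨b, ⟨hb0, hbc⟩, rfl⟩ := hu
    cases β with
    | inr b' => exact absurd hadj adj_inr_inr
    | inl a =>
      rcases adj_inr_inl.mp hadj with ⟨rfl, _⟩ | ⟨_, h0, _⟩
      · exact ⟨rfl, Or.inr ⟨a, rfl⟩⟩
      · exact absurd h0 hb0

lemma isKFort_FL (hr : 4 ≤ r) (i : Fin q) (c : Fin r) :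
    IsKFort (Dgraph r q) (r - 3) (FL i c) := by
  obtain ⟨a, ha0, hac⟩ := exists_ne_ne hr c
  refine ⟨⟨(i, Sum.inl a), ⟨a, ⟨ha0, hac⟩, rfl⟩⟩, ?_⟩
  rintro v ⟨hv1, hv2⟩
  obtain ⟨hj, hcases⟩ := closedNbhd_FL_subset i c hv1
  obtain ⟨j, β⟩ := v
  rcases hcases with ⟨a', heq, ha'⟩ | ⟨b, heq⟩
  · exact absurd ⟨a', ha', by simp only at hj heq; rw [hj, heq]⟩ hv2
  · simp only at hj heq; replace hj := hj.symm; subst hj; subst heq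
    have hsub : (fun a => ((i, Sum.inl a) : Fin q × (Fin r ⊕ Fin r))) ''
        {a : Fin r | a ≠ 0 ∧ a ≠ c} ⊆ (Dgraph r q).neighborSet (i, Sum.inr b) ∩ FL i c := by
      rintro x ⟨a', ⟨ha'0, ha'c⟩, rfl⟩
      exact ⟨adj_inr_inl.mpr (Or.inl ⟨rfl, fun h => ha'0 h.1⟩), ⟨a', ⟨ha'0, ha'c⟩, rfl⟩⟩
    have hinj : Function.Injective
        (fun a : Fin r => ((i, Sum.inl a) : Fin q × (Fin r ⊕ Fin r))) := by
      intro x y h; simpa using h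
    have h1 := Set.ncard_le_ncard hsub (Set.toFinite _)
    rw [Set.ncard_image_of_injective _ hinj] at h1
    have h2 := ncard_A (r := r) c
    omega

lemma isKFort_FR (hr : 4 ≤ r) (i : Fin q) (c : Fin r) :
    IsKFort (Dgraph r q) (r - 3) (FR i c) := by
  obtain ⟨b, hb0, hbc⟩ := exists_ne_ne hr c
  refine ⟨⟨(i, Sum.inr b), ⟨b, ⟨hb0, hbc⟩, rfl⟩⟩, ?_⟩
  rintro v ⟨hv1, hv2⟩
  obtain ⟨hj, hcases⟩ := closedNbhd_FR_subset i c hv1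
  obtain ⟨j, β⟩ := v
  rcases hcases with ⟨b', heq, hb'⟩ | ⟨a, heq⟩
  · exact absurd ⟨b', hb', by simp only at hj heq; rw [hj, heq]⟩ hv2
  · simp only at hj heq; replace hj := hj.symm; subst hj; subst heq
    have hsub : (fun b => ((i, Sum.inr b) : Fin q × (Fin r ⊕ Fin r))) ''
        {b : Fin r | b ≠ 0 ∧ b ≠ c} ⊆ (Dgraph r q).neighborSet (i, Sum.inl a) ∩ FR i c := by
      rintro x ⟨b', ⟨hb'0, hb'c⟩, rfl⟩
      exact ⟨adj_inl_inr.mpr (Or.inl ⟨rfl, fun h => hb'0 h.2⟩), ⟨b', ⟨hb'0, hb'c⟩, rfl⟩⟩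
    have hinj : Function.Injective
        (fun b : Fin r => ((i, Sum.inr b) : Fin q × (Fin r ⊕ Fin r))) := by
      intro x y h; simpa using h
    have h1 := Set.ncard_le_ncard hsub (Set.toFinite _)
    rw [Set.ncard_image_of_injective _ hinj] at h1
    have h2 := ncard_A (r := r) c
    omega

lemma ncard_fin_univ : (Set.univ : Set (Fin r)).ncard = r := by
  rw [Set.ncard_univ]; simp

lemma nbr_inl_ne (i : Fin q) {a : Fin r} (ha : a ≠ 0) :
    (Dgraph r q).neighborSet (i, Sum.inl a) = (fun b => (i, Sum.inr b)) '' Set.univ := by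
  ext ⟨j, β⟩
  simp only [mem_neighborSet, Set.image_univ, Set.mem_range]
  constructor
  · intro h
    cases β with
    | inl a' => exact absurd h adj_inl_inl
    | inr b =>
      rcases adj_inl_inr.mp h with ⟨rfl, _⟩ | ⟨h0, _, _⟩
      · exact ⟨b, rfl⟩
      · exact absurd h0 ha
  · rintro ⟨b, heq⟩
    cases heq
    exact adj_inl_inr.mpr (Or.inl ⟨rfl, fun h => ha h.1⟩)

lemma nbr_inl_zero (i : Fin q) :
    (Dgraph r q).neighborSet (i, Sum.inl 0) =
      (fun b : Fin r => if b = 0 then ((i - 1, Sum.inr 0) : Fin q × (Fin r ⊕ Fin r))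
        else (i, Sum.inr b)) '' Set.univ := by
  ext ⟨j, β⟩
  simp only [mem_neighborSet, Set.image_univ, Set.mem_range]
  constructor
  · intro h
    cases β with
    | inl a' => exact absurd h adj_inl_inl
    | inr b =>
      rcases adj_inl_inr.mp h with ⟨rfl, hb⟩ | ⟨_, rfl, hij⟩
      · have hb0 : b ≠ 0 := fun h0 => hb ⟨rfl, h0⟩
        exact ⟨b, by rw [if_neg hb0]⟩
      · refine ⟨0, by rw [if_pos rfl, eq_sub_of_add_eq hij.symm]⟩
  · rintro ⟨b, heq⟩
    by_cases hb : b = 0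
    · rw [if_pos hb] at heq
      cases heq
      exact adj_inl_inr.mpr (Or.inr ⟨rfl, rfl, (sub_add_cancel i 1).symm⟩)
    · rw [if_neg hb] at heq
      cases heq
      exact adj_inl_inr.mpr (Or.inl ⟨rfl, fun h => hb h.2⟩)

lemma nbr_inr_ne (i : Fin q) {b : Fin r} (hb : b ≠ 0) :
    (Dgraph r q).neighborSet (i, Sum.inr b) = (fun a => (i, Sum.inl a)) '' Set.univ := by
  ext ⟨j, β⟩
  simp only [mem_neighborSet, Set.image_univ, Set.mem_range]
  constructor
  · intro h
    cases β with
    | inr b' => exact absurd h adj_inr_inr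
    | inl a =>
      rcases adj_inr_inl.mp h with ⟨rfl, _⟩ | ⟨_, h0, _⟩
      · exact ⟨a, rfl⟩
      · exact absurd h0 hb
  · rintro ⟨a, heq⟩
    cases heq
    exact adj_inr_inl.mpr (Or.inl ⟨rfl, fun h => hb h.2⟩)

lemma nbr_inr_zero (i : Fin q) :
    (Dgraph r q).neighborSet (i, Sum.inr 0) =
      (fun a : Fin r => if a = 0 then ((i + 1, Sum.inl 0) : Fin q × (Fin r ⊕ Fin r))
        else (i, Sum.inl a)) '' Set.univ := by
  ext ⟨j, β⟩
  simp only [mem_neighborSet, Set.image_univ, Set.mem_range]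
  constructor
  · intro h
    cases β with
    | inr b' => exact absurd h adj_inr_inr
    | inl a =>
      rcases adj_inr_inl.mp h with ⟨rfl, ha⟩ | ⟨rfl, _, rfl⟩
      · have ha0 : a ≠ 0 := fun h0 => ha ⟨h0, rfl⟩
        exact ⟨a, by rw [if_neg ha0]⟩
      · exact ⟨0, by rw [if_pos rfl]⟩
  · rintro ⟨a, heq⟩
    by_cases ha : a = 0
    · rw [if_pos ha] at heq
      cases heq
      exact adj_inr_inl.mpr (Or.inr ⟨rfl, rfl, rfl⟩)
    · rw [if_neg ha] at heq
      cases heq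
      exact adj_inr_inl.mpr (Or.inl ⟨rfl, fun h => ha h.1⟩)

lemma dgraph_regular : ∀ v : Fin q × (Fin r ⊕ Fin r),
    ((Dgraph r q).neighborSet v).ncard = r := by
  rintro ⟨i, β⟩
  cases β with
  | inl a =>
    by_cases ha : a = 0
    · subst ha
      rw [nbr_inl_zero i]
      rw [Set.ncard_image_of_injective _ ?_, ncard_fin_univ]
      intro x y h
      by_cases hx : x = 0 <;> by_cases hy : y = 0 <;>
        simp_all [Prod.ext_iff]
    · rw [nbr_inl_ne i ha, Set.ncard_image_of_injective _ ?_, ncard_fin_univ]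
      intro x y h; simpa using h
  | inr b =>
    by_cases hb : b = 0
    · subst hb
      rw [nbr_inr_zero i]
      rw [Set.ncard_image_of_injective _ ?_, ncard_fin_univ]
      intro x y h
      by_cases hx : x = 0 <;> by_cases hy : y = 0 <;>
        simp_all [Prod.ext_iff]
    · rw [nbr_inr_ne i hb, Set.ncard_image_of_injective _ ?_, ncard_fin_univ]
      intro x y h; simpa using h

lemma reach_aux (hr : 4 ≤ r) (i : Fin q) (β : Fin r ⊕ Fin r) :
    (Dgraph r q).Reachable (i, β) (i, Sum.inl 0) := by
  have hone : (⟨1, by omega⟩ : Fin r) ≠ 0 := by simp [Fin.ext_iff]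
  have adj2 : (Dgraph r q).Adj (i, Sum.inl 0) (i, Sum.inr ⟨1, by omega⟩) :=
    adj_inl_inr.mpr (Or.inl ⟨rfl, fun h => hone h.2⟩)
  cases β with
  | inl a =>
    by_cases ha : a = 0
    · rw [ha]
    · have adj1 : (Dgraph r q).Adj (i, Sum.inl a) (i, Sum.inr ⟨1, by omega⟩) :=
        adj_inl_inr.mpr (Or.inl ⟨rfl, fun h => ha h.1⟩)
      exact adj1.reachable.trans adj2.symm.reachable
  | inr b =>
    have adjA : (Dgraph r q).Adj (i, Sum.inr b) (i, Sum.inl ⟨1, by omega⟩) :=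
      adj_inr_inl.mpr (Or.inl ⟨rfl, fun h => hone h.1⟩)
    have adjB : (Dgraph r q).Adj (i, Sum.inl ⟨1, by omega⟩) (i, Sum.inr ⟨1, by omega⟩) :=
      adj_inl_inr.mpr (Or.inl ⟨rfl, fun h => hone h.1⟩)
    exact adjA.reachable.trans (adjB.reachable.trans adj2.symm.reachable)

lemma reach_x0 (hr : 4 ≤ r) : ∀ n (i : Fin q), i.val = n →
    (Dgraph r q).Reachable (i, Sum.inl 0) ((0 : Fin q), Sum.inl 0) := by
  intro n
  induction n with
  | zero =>
    intro i h
    have : i = 0 := Fin.ext (by simp [h])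
    rw [this]
  | succ n ih =>
    intro i h
    have hn : n + 1 < q := h ▸ i.isLt
    set j : Fin q := ⟨n, by omega⟩ with hj
    have hij : i = j + 1 := by
      apply Fin.ext
      rw [Fin.add_def]
      have h1 : ((1 : Fin q) : ℕ) = 1 := by
        rw [Fin.val_one']; exact Nat.mod_eq_of_lt (by omega)
      rw [h1]
      show i.val = (n + 1) % q
      rw [Nat.mod_eq_of_lt hn]; exact h
    have hadj : (Dgraph r q).Adj (j, Sum.inr 0) (i, Sum.inl 0) :=
      adj_inr_inl.mpr (Or.inr ⟨rfl, rfl, hij⟩)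
    exact hadj.symm.reachable.trans ((reach_aux hr j (Sum.inr 0)).trans (ih j rfl))

lemma dgraph_connected (hr : 4 ≤ r) : (Dgraph r q).Connected := by
  rw [connected_iff]
  refine ⟨fun u v => ?_, ⟨((0 : Fin q), Sum.inl 0)⟩⟩
  obtain ⟨i, β⟩ := u; obtain ⟨j, γ⟩ := v
  exact ((reach_aux hr i β).trans (reach_x0 hr i.val i rfl)).trans
    (((reach_aux hr j γ).trans (reach_x0 hr j.val j rfl)).symm)

end Graph

section Bounds
variable {r q : ℕ} [NeZero r] [NeZero q]

lemma two_per_copy (hr : 4 ≤ r) {S : Set (Fin q × (Fin r ⊕ Fin r))}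
    (hS : IsKPDS (Dgraph r q) (r - 3) S) (i : Fin q) :
    ∃ p₁ ∈ S, ∃ p₂ ∈ S, p₁.1 = i ∧ p₂.1 = i ∧ p₁ ≠ p₂ := by
  obtain ⟨s₁, hs₁S, hs₁N⟩ := kpds_meets_fort hS (isKFort_FL hr i 0)
  obtain ⟨hj₁, _⟩ := closedNbhd_FL_subset i 0 hs₁N
  obtain ⟨j₁, β₁⟩ := s₁
  cases β₁ with
  | inl c =>
    obtain ⟨s₂, hs₂S, hs₂N⟩ := kpds_meets_fort hS (isKFort_FL hr i c)
    have h2 := closedNbhd_FL_subset i c hs₂N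
    refine ⟨(j₁, Sum.inl c), hs₁S, s₂, hs₂S, hj₁, h2.1, ?_⟩
    intro heq
    rw [← heq] at h2
    rcases h2.2 with ⟨a, ha, _, hac⟩ | ⟨b, hb⟩
    · exact hac (Sum.inl.inj ha).symm
    · exact absurd hb (by simp)
  | inr c =>
    obtain ⟨s₂, hs₂S, hs₂N⟩ := kpds_meets_fort hS (isKFort_FR hr i c)
    have h2 := closedNbhd_FR_subset i c hs₂N
    refine ⟨(j₁, Sum.inr c), hs₁S, s₂, hs₂S, hj₁, h2.1, ?_⟩
    intro heq
    rw [← heq] at h2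
    rcases h2.2 with ⟨b, hb, _, hbc⟩ | ⟨a, ha⟩
    · exact hbc (Sum.inr.inj hb).symm
    · exact absurd ha (by simp)

lemma lower_bound (hr : 4 ≤ r) {S : Set (Fin q × (Fin r ⊕ Fin r))}
    (hS : IsKPDS (Dgraph r q) (r - 3) S) : 2 * q ≤ S.ncard := by
  classical
  have hfin : S.Finite := Set.toFinite S
  have hcard : S.ncard = hfin.toFinset.card := Set.ncard_eq_toFinset_card S hfin
  have hsum : hfin.toFinset.card =
      ∑ i : Fin q, (hfin.toFinset.filter (fun p => p.1 = i)).card :=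
    Finset.card_eq_sum_card_fiberwise (fun x _ => Finset.mem_univ x.1)
  have hfib : ∀ i : Fin q, 2 ≤ (hfin.toFinset.filter (fun p => p.1 = i)).card := by
    intro i
    obtain ⟨p₁, hp₁, p₂, hp₂, h1, h2, hne⟩ := two_per_copy hr hS i
    have m1 : p₁ ∈ hfin.toFinset.filter (fun p => p.1 = i) :=
      Finset.mem_filter.mpr ⟨hfin.mem_toFinset.mpr hp₁, h1⟩
    have m2 : p₂ ∈ hfin.toFinset.filter (fun p => p.1 = i) :=
      Finset.mem_filter.mpr ⟨hfin.mem_toFinset.mpr hp₂, h2⟩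
    exact Finset.one_lt_card.mpr ⟨p₁, m1, p₂, m2, hne⟩
  have h2q : 2 * q ≤ ∑ i : Fin q, (hfin.toFinset.filter (fun p => p.1 = i)).card := by
    calc 2 * q = ∑ _i : Fin q, 2 := by
          rw [Finset.sum_const, Finset.card_univ, Fintype.card_fin, smul_eq_mul]
          ring
      _ ≤ _ := Finset.sum_le_sum (fun i _ => hfib i)
  omega

lemma upper_bound (hr : 4 ≤ r) :
    ∃ S : Set (Fin q × (Fin r ⊕ Fin r)), S.Finite ∧ S.ncard = 2 * q ∧
      IsKPDS (Dgraph r q) (r - 3) S := by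
  classical
  have hginj : Function.Injective (Sum.elim (fun i : Fin q => ((i, Sum.inl 0) : Fin q × (Fin r ⊕ Fin r)))
      (fun i => (i, Sum.inr 0))) := by
    rintro (x | x) (y | y) h <;>
      simp only [Sum.elim_inl, Sum.elim_inr, Prod.mk.injEq] at h
    · exact congrArg Sum.inl h.1
    · exact absurd h.2 (by simp)
    · exact absurd h.2 (by simp)
    · exact congrArg Sum.inr h.1
  refine ⟨Set.range (Sum.elim (fun i : Fin q => ((i, Sum.inl 0) : Fin q × (Fin r ⊕ Fin r)))
      (fun i => (i, Sum.inr 0))), Set.toFinite _, ?_, ?_⟩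
  · rw [← Set.image_univ, Set.ncard_image_of_injective _ hginj, Set.ncard_univ]
    simp [Nat.card_eq_fintype_card]
    ring
  · unfold IsKPDS monitoredInf
    apply monitored_univ
    apply Set.eq_univ_of_forall
    rintro ⟨i, β⟩
    cases β with
    | inl a =>
      by_cases ha : a = 0
      · subst ha; exact Or.inl ⟨Sum.inl i, rfl⟩
      · exact Or.inr ⟨(i, Sum.inr 0), ⟨Sum.inr i, rfl⟩,
          adj_inr_inl.mpr (Or.inl ⟨rfl, fun h => ha h.1⟩)⟩
    | inr b =>
      by_cases hb : b = 0
      · subst hb; exact Or.inl ⟨Sum.inr i, rfl⟩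
      · exact Or.inr ⟨(i, Sum.inl 0), ⟨Sum.inl i, rfl⟩,
          adj_inl_inr.mpr (Or.inl ⟨rfl, fun h => hb h.2⟩)⟩

lemma dgraph_pdn (hr : 4 ≤ r) : powerDomNumber (Dgraph r q) (r - 3) = 2 * q := by
  have hne : {m | ∃ S : Set (Fin q × (Fin r ⊕ Fin r)), S.Finite ∧ S.ncard = m ∧
      IsKPDS (Dgraph r q) (r - 3) S}.Nonempty := by
    obtain ⟨S, h1, h2, h3⟩ := upper_bound (q := q) hr
    exact ⟨2 * q, S, h1, h2, h3⟩
  apply le_antisymm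
  · obtain ⟨S, h1, h2, h3⟩ := upper_bound (q := q) hr
    exact Nat.sInf_le ⟨S, h1, h2, h3⟩
  · obtain ⟨S, _, hScard, hSk⟩ := Nat.sInf_mem hne
    rw [powerDomNumber, ← hScard]
    exact lower_bound hr hSk

end Bounds

theorem Dgraph_powerDomNumber (r q : ℕ) (hr : 4 ≤ r) (hq : 2 ≤ q) :
    haveI : NeZero r := ⟨by omega⟩
    haveI : NeZero q := ⟨by omega⟩
    (Dgraph r q).Connected ∧ RegularOfDegree (Dgraph r q) r ∧
      Nat.card (Fin q × (Fin r ⊕ Fin r)) = 2 * q * r ∧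
      powerDomNumber (Dgraph r q) (r - 3) = 2 * q ∧
      2 * q = 2 * q * r / r ∧
      2 * q * r / (r + 1) < 2 * q := by
  haveI : NeZero r := ⟨by omega⟩
  haveI : NeZero q := ⟨by omega⟩
  refine ⟨dgraph_connected hr, dgraph_regular, ?_, dgraph_pdn hr, ?_, ?_⟩
  · simp [Nat.card_eq_fintype_card]
    ring
  · rw [Nat.mul_div_cancel _ (by omega : 0 < r)]
  · rw [Nat.div_lt_iff_lt_mul (by omega : 0 < r + 1)]
    exact Nat.mul_lt_mul_of_pos_left (by omega) (by omega)
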